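/- If P₁ and P₂ are two distinct essential subsets of an additive basis A, then d(P₁) ≥ 2, d(P₂) ≥ 2, and gcd(d(P₁), d(P₂)) = 1. -/
import Mathlib


open scoped BigOperators

/-- `A` represents every sufficiently large integer as a sum of `h` of its elements
(repetitions allowed). -/
def RepresentsWith (A : Set ℤ) (h : ℕ) : Prop :=
  ∃ N : ℤ, ∀ n : ℤ, N ≤ n → ∃ f : Fin h → ℤ, (∀ i, f i ∈ A) ∧ (∑ i, f i) = n

/-- `A ⊆ ℤ` is an additive basis: it has finite intersection with the negative integers and
there is an `h` such that every sufficiently large integer is a sum of `h` elements of `A`. -/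
def IsAdditiveBasis (A : Set ℤ) : Prop :=
  (A ∩ {x : ℤ | x < 0}).Finite ∧ ∃ h : ℕ, RepresentsWith A h

/-- `P` is an essentiality of `A`: `P ⊆ A`, `A \ P` is not a basis, and `P` is minimal
for inclusion with this property. -/
def IsEssentiality (A P : Set ℤ) : Prop :=
  P ⊆ A ∧ ¬ IsAdditiveBasis (A \ P) ∧ ∀ Q : Set ℤ, Q ⊂ P → IsAdditiveBasis (A \ Q)

/-- `P` is an essential subset of `A`: a finite essentiality. -/
def IsEssentialSubset (A P : Set ℤ) : Prop :=
  IsEssentiality A P ∧ P.Finite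

/-- The gcd of a set of integers, as a natural number (the nonnegative generator of the
ideal generated by the set). -/
noncomputable def setGcd (S : Set ℤ) : ℕ :=
  (Submodule.IsPrincipal.generator (Ideal.span S)).natAbs

/-- `d(P) := gcd {x - y : x, y ∈ A \ P}`. -/
noncomputable def dP (A P : Set ℤ) : ℕ :=
  setGcd {z : ℤ | ∃ x ∈ A \ P, ∃ y ∈ A \ P, z = x - y}

def LRep (B : Set ℤ) (k : ℕ) (n : ℤ) : Prop :=
  ∃ l : List ℤ, l.length = k ∧ (∀ x ∈ l, x ∈ B) ∧ l.sum = n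

lemma LRep.add {B : Set ℤ} {k j : ℕ} {m n : ℤ} (h1 : LRep B k m) (h2 : LRep B j n) :
    LRep B (k + j) (m + n) := by
  obtain ⟨l1, hl1, hm1, hs1⟩ := h1
  obtain ⟨l2, hl2, hm2, hs2⟩ := h2
  refine ⟨l1 ++ l2, by simp [hl1, hl2], ?_, by simp [hs1, hs2]⟩
  intro x hx
  rcases List.mem_append.mp hx with h | h
  exacts [hm1 x h, hm2 x h]

lemma LRep.zero (B : Set ℤ) : LRep B 0 0 := ⟨[], rfl, by simp, rfl⟩

lemma LRep.single {B : Set ℤ} {x : ℤ} (hx : x ∈ B) : LRep B 1 x :=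
  ⟨[x], rfl, by simpa, by simp⟩

lemma LRep.nsmul {B : Set ℤ} {k : ℕ} {n : ℤ} (h : LRep B k n) (u : ℕ) :
    LRep B (u * k) ((u : ℤ) * n) := by
  induction u with
  | zero => simpa using LRep.zero B
  | succ u ih =>
      have h2 := ih.add h
      have e1 : (u + 1) * k = u * k + k := by ring
      have e2 : ((u + 1 : ℕ) : ℤ) * n = (u : ℤ) * n + n := by push_cast; ring
      rw [e1, e2]; exact h2

lemma LRep.toFun {B : Set ℤ} {k : ℕ} {n : ℤ} (h : LRep B k n) :
    ∃ f : Fin k → ℤ, (∀ i, f i ∈ B) ∧ ∑ i, f i = n := by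
  obtain ⟨l, hl, hm, hs⟩ := h
  subst hl
  exact ⟨l.get, fun i => hm _ (l.get_mem ..), by rw [← List.sum_ofFn, List.ofFn_get]; exact hs⟩

lemma bezout_rep (B : Set ℤ) (s : Finset ℤ) (c : ℤ → ℤ)
    (hs : ∀ z ∈ s, ∃ x ∈ B, ∃ y ∈ B, z = x - y) :
    ∃ t : ℕ, ∃ n₁ n₂ : ℤ, LRep B t n₁ ∧ LRep B t n₂ ∧ n₁ - n₂ = ∑ z ∈ s, c z * z := by
  classical
  induction s using Finset.induction_on with
  | empty => exact ⟨0, 0, 0, LRep.zero B, LRep.zero B, by simp⟩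
  | @insert a s' ha ih =>
      obtain ⟨x, hx, y, hy, hxy⟩ := hs a (Finset.mem_insert_self a s')
      obtain ⟨t, n₁, n₂, h1, h2, hsum⟩ := ih (fun z hz => hs z (Finset.mem_insert_of_mem hz))
      rw [Finset.sum_insert ha]
      by_cases hc : 0 ≤ c a
      · have hcx := (LRep.single hx).nsmul (c a).natAbs
        have hcy := (LRep.single hy).nsmul (c a).natAbs
        rw [Nat.mul_one, Int.natAbs_of_nonneg hc] at hcx hcy
        refine ⟨t + (c a).natAbs, n₁ + c a * x, n₂ + c a * y, h1.add hcx, h2.add hcy, ?_⟩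
        rw [hxy] at *
        linear_combination hsum + c a * (rfl : x - y = x - y)
      · have hc' : 0 ≤ -(c a) := by linarith
        have hcx := (LRep.single hy).nsmul (c a).natAbs
        have hcy := (LRep.single hx).nsmul (c a).natAbs
        have hna : ((c a).natAbs : ℤ) = -(c a) := by
          rw [← Int.natAbs_neg, Int.natAbs_of_nonneg hc']
        rw [Nat.mul_one, hna] at hcx hcy
        refine ⟨t + (c a).natAbs, n₁ + (-(c a)) * y, n₂ + (-(c a)) * x, h1.add hcx, h2.add hcy, ?_⟩
        rw [hxy]
        linear_combination hsum

lemma LRep.interval {B : Set ℤ} {t : ℕ} {s₁ s₂ : ℤ} (h1 : LRep B t s₁) (h2 : LRep B t s₂)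
    (h12 : s₁ - s₂ = 1) (r u : ℕ) (hu : u ≤ r) : LRep B (r * t) ((r : ℤ) * s₂ + u) := by
  have h3 := (h1.nsmul u).add (h2.nsmul (r - u))
  have e1 : u * t + (r - u) * t = r * t := by
    rw [← Nat.add_mul, Nat.add_sub_cancel' hu]
  have e2 : (u : ℤ) * s₁ + ((r - u : ℕ) : ℤ) * s₂ = (r : ℤ) * s₂ + u := by
    rw [Nat.cast_sub hu]
    have hs : s₁ = s₂ + 1 := by omega
    rw [hs]; ring
  rw [e1, e2] at h3
  exact h3
open scoped BigOperators





lemma setGcd_eq_zero_imp {S : Set ℤ} (h : setGcd S = 0) : ∀ z ∈ S, z = 0 := by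
  intro z hz
  unfold setGcd at h
  have hg : Submodule.IsPrincipal.generator (Ideal.span S) = 0 := Int.natAbs_eq_zero.mp h
  have hmem : z ∈ Ideal.span S := Ideal.subset_span hz
  rw [← Submodule.IsPrincipal.span_singleton_generator (Ideal.span S), hg] at hmem
  simpa using Ideal.mem_span_singleton.mp hmem

lemma one_mem_span_of_setGcd_eq_one {S : Set ℤ} (h : setGcd S = 1) :
    (1 : ℤ) ∈ Submodule.span ℤ S := by
  have hu : IsUnit (Submodule.IsPrincipal.generator (Ideal.span S)) :=
    Int.isUnit_iff_natAbs_eq.mpr h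
  have htop : Ideal.span S = ⊤ := by
    rw [← Submodule.IsPrincipal.span_singleton_generator (Ideal.span S)]
    exact Ideal.span_singleton_eq_top.mpr hu
  have : (1 : ℤ) ∈ Ideal.span S := htop ▸ Submodule.mem_top
  exact this

lemma dP_dvd {A P : Set ℤ} {x y : ℤ} (hx : x ∈ A \ P) (hy : y ∈ A \ P) :
    ((dP A P : ℤ)) ∣ x - y := by
  unfold dP setGcd
  have hmem : x - y ∈ Ideal.span {z : ℤ | ∃ x ∈ A \ P, ∃ y ∈ A \ P, z = x - y} :=
    Ideal.subset_span ⟨x, hx, y, hy, rfl⟩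
  rw [← Submodule.IsPrincipal.span_singleton_generator
    (Ideal.span {z : ℤ | ∃ x ∈ A \ P, ∃ y ∈ A \ P, z = x - y})] at hmem
  exact Int.natAbs_dvd.mpr (Ideal.mem_span_singleton.mp hmem)

lemma IsAdditiveBasis.infinite {A : Set ℤ} (hA : IsAdditiveBasis A) : A.Infinite := by
  obtain ⟨-, h, N, hrep⟩ := hA
  intro hfin
  obtain ⟨M, hM⟩ := hfin.bddAbove
  set n := max N ((h : ℤ) * M + 1) with hn
  obtain ⟨f, hf, hsum⟩ := hrep n (le_max_left _ _)
  have hle : n ≤ (h : ℤ) * M := by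
    calc n = ∑ i, f i := hsum.symm
      _ ≤ ∑ _i : Fin h, M := Finset.sum_le_sum fun i _ => hM (hf i)
      _ = (h : ℤ) * M := by
          rw [Finset.sum_const, Finset.card_univ, Fintype.card_fin, nsmul_eq_mul]
  have := le_max_right N ((h : ℤ) * M + 1)
  omega

lemma diff_basis_of_dP_eq_one {A P : Set ℤ} (hA : IsAdditiveBasis A) (hP : P.Finite)
    (hd : dP A P = 1) : IsAdditiveBasis (A \ P) := by
  classical
  have hBinf : (A \ P).Infinite := hA.infinite.diff hP
  obtain ⟨b₀, hb₀⟩ := hBinf.nonempty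
  -- Bezout: obtain s₁ - s₂ = 1 with both sums of t elements of A \ P
  have h1 : (1 : ℤ) ∈ Submodule.span ℤ {z : ℤ | ∃ x ∈ A \ P, ∃ y ∈ A \ P, z = x - y} :=
    one_mem_span_of_setGcd_eq_one hd
  obtain ⟨c, hcsupp, hcsum⟩ := Submodule.mem_span_set.mp h1
  obtain ⟨t, s₁, s₂, ht1, ht2, hts⟩ := bezout_rep (A \ P) c.support c (fun z hz => hcsupp hz)
  have h12 : s₁ - s₂ = 1 := by
    rw [hts, ← hcsum, Finsupp.sum]
    simp [smul_eq_mul, mul_comm]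
  -- bound for elements of P
  obtain ⟨M, hM0, hM⟩ : ∃ M : ℤ, 0 ≤ M ∧ ∀ x ∈ P, |x| ≤ M := by
    obtain ⟨M0, hM0⟩ := (hP.image (fun x => |x|)).bddAbove
    exact ⟨max M0 0, le_max_right _ _,
      fun x hx => le_trans (hM0 ⟨x, hx, rfl⟩) (le_max_left _ _)⟩
  obtain ⟨hNegFin, h, N, hrep⟩ := hA
  set K : ℤ := (h : ℤ) * (|b₀| + M) with hK
  have hK0 : 0 ≤ K := mul_nonneg (by positivity) (by positivity)
  -- every large n can be corrected by |cc| ≤ K into a sum of h elements of A \ P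
  have key : ∀ n : ℤ, N ≤ n → ∃ cc : ℤ, |cc| ≤ K ∧ LRep (A \ P) h (n + cc) := by
    intro n hn
    obtain ⟨f, hf, hsum⟩ := hrep n hn
    refine ⟨∑ i, (if f i ∈ P then b₀ - f i else 0), ?_, ?_⟩
    · calc |∑ i, (if f i ∈ P then b₀ - f i else 0)|
          ≤ ∑ i, |if f i ∈ P then b₀ - f i else 0| := Finset.abs_sum_le_sum_abs _ _
        _ ≤ ∑ _i : Fin h, (|b₀| + M) := by
            refine Finset.sum_le_sum fun i _ => ?_
            split
            · next hip =>
                calc |b₀ - f i| ≤ |b₀| + |f i| := abs_sub _ _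
                  _ ≤ |b₀| + M := by linarith [hM _ hip]
            · simpa using by positivity
        _ = K := by rw [Finset.sum_const, Finset.card_univ, Fintype.card_fin, nsmul_eq_mul]
    · refine ⟨List.ofFn (fun i => if f i ∈ P then b₀ else f i), by simp, ?_, ?_⟩
      · intro x hx
        rw [List.mem_ofFn] at hx
        obtain ⟨i, rfl⟩ := hx
        by_cases hip : f i ∈ P
        · simpa [hip] using hb₀
        · have : f i ∈ A \ P := ⟨hf i, hip⟩
          simpa [hip] using this
      · rw [List.sum_ofFn]
        have hterm : ∀ i : Fin h,
            (if f i ∈ P then b₀ else f i) = f i + (if f i ∈ P then b₀ - f i else 0) := by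
          intro i; split <;> ring
        rw [Finset.sum_congr rfl (fun i _ => hterm i), Finset.sum_add_distrib, hsum]
  set r : ℕ := (2 * K).toNat with hr
  have hrZ : (r : ℤ) = 2 * K := Int.toNat_of_nonneg (by linarith)
  constructor
  · exact hNegFin.subset (fun x hx => ⟨hx.1.1, hx.2⟩)
  refine ⟨h + r * t, N + (r : ℤ) * s₂ + K, fun n hn => ?_⟩
  set m := n - (r : ℤ) * s₂ - K with hm
  obtain ⟨cc, hcc, hLm⟩ := key m (by omega)
  obtain ⟨hcc1, hcc2⟩ := abs_le.mp hcc
  set u : ℕ := (K - cc).toNat with huu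
  have hu1 : (u : ℤ) = K - cc := Int.toNat_of_nonneg (by linarith)
  have hu2 : u ≤ r := by
    have : (u : ℤ) ≤ (r : ℤ) := by rw [hu1, hrZ]; linarith
    exact_mod_cast this
  have hI := LRep.interval ht1 ht2 h12 r u hu2
  have hfin := hLm.add hI
  have heq : (m + cc) + ((r : ℤ) * s₂ + u) = n := by rw [hu1, hm]; ring
  rw [heq] at hfin
  exact hfin.toFun

lemma two_le_dP {A P : Set ℤ} (hA : IsAdditiveBasis A) (hP : IsEssentialSubset A P) :
    2 ≤ dP A P := by
  obtain ⟨⟨hsub, hnb, hmin⟩, hfin⟩ := hP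
  have hBinf : (A \ P).Infinite := hA.infinite.diff hfin
  rcases Nat.lt_or_ge (dP A P) 2 with hlt | h2
  · exfalso
    have : dP A P = 0 ∨ dP A P = 1 := by omega
    rcases this with h0 | h1
    · obtain ⟨x, hx, y, hy, hxy⟩ := hBinf.nontrivial
      have := setGcd_eq_zero_imp h0 (x - y) ⟨x, hx, y, hy, rfl⟩
      omega
    · exact hnb (diff_basis_of_dP_eq_one hA hfin h1)
  · exact h2

theorem dP_ge_two_and_coprime_of_essentialSubsets (A P₁ P₂ : Set ℤ)
    (hA : IsAdditiveBasis A)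
    (h₁ : IsEssentialSubset A P₁) (h₂ : IsEssentialSubset A P₂) (hne : P₁ ≠ P₂) :
    2 ≤ dP A P₁ ∧ 2 ≤ dP A P₂ ∧ Nat.gcd (dP A P₁) (dP A P₂) = 1 := by
  refine ⟨two_le_dP hA h₁, two_le_dP hA h₂, ?_⟩
  obtain ⟨⟨hsub₁, hnb₁, hmin₁⟩, hfin₁⟩ := h₁
  obtain ⟨⟨hsub₂, hnb₂, hmin₂⟩, hfin₂⟩ := h₂
  set g := Nat.gcd (dP A P₁) (dP A P₂) with hg
  have hns : ¬ P₁ ⊆ P₂ := fun hss =>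
    hnb₁ (hmin₂ P₁ (ssubset_of_subset_of_ne hss hne))
  have hQ : P₁ ∩ P₂ ⊂ P₁ :=
    ⟨Set.inter_subset_left, fun hle => hns (fun x hx => (hle hx).2)⟩
  obtain ⟨-, h', N', hrep'⟩ := hmin₁ _ hQ
  obtain ⟨w, hwA, hwP⟩ := (hA.infinite.diff (hfin₁.union hfin₂)).nonempty
  have hw1 : w ∉ P₁ := fun hw => hwP (Or.inl hw)
  have hw2 : w ∉ P₂ := fun hw => hwP (Or.inr hw)
  have hdvd : ∀ x ∈ A \ (P₁ ∩ P₂), (g : ℤ) ∣ x - w := by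
    intro x hx
    by_cases hx1 : x ∈ P₁
    · have hx2 : x ∉ P₂ := fun h2 => hx.2 ⟨hx1, h2⟩
      exact dvd_trans (Int.natCast_dvd_natCast.mpr (Nat.gcd_dvd_right _ _))
        (dP_dvd ⟨hx.1, hx2⟩ ⟨hwA, hw2⟩)
    · exact dvd_trans (Int.natCast_dvd_natCast.mpr (Nat.gcd_dvd_left _ _))
        (dP_dvd ⟨hx.1, hx1⟩ ⟨hwA, hw1⟩)
  have hmod : ∀ n : ℤ, N' ≤ n → (g : ℤ) ∣ n - (h' : ℤ) * w := by
    intro n hn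
    obtain ⟨f, hf, hsum⟩ := hrep' n hn
    have heq : n - (h' : ℤ) * w = ∑ i : Fin h', (f i - w) := by
      rw [Finset.sum_sub_distrib, hsum, Finset.sum_const, Finset.card_univ,
        Fintype.card_fin, nsmul_eq_mul]
    rw [heq]
    exact Finset.dvd_sum fun i _ => hdvd (f i) (hf i)
  have d1 := hmod N' le_rfl
  have d2 := hmod (N' + 1) (by linarith)
  have hone : (g : ℤ) ∣ 1 := by
    have := dvd_sub d2 d1
    simpa using this
  exact Nat.dvd_one.mp (by exact_mod_cast hone)
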